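/- If B ≥ K/2, then the gap between the outer and inner bounds has the closed form G(L) = (1/L)·Σ_{j=1}^{L} [2^{-(j-1)}·H₂(2^{-j}) + 1_{j≥2}·2^{3-2j}·H₂(1/4) + max(j-3, 0)·2^{3-2j}/K] for every integer L ≥ 1, where 1_{j≥2} equals 1 if j ≥ 2 and 0 if j = 1. -/

import Mathlib

open Finset Filter Topology

/-- Binary entropy function with base-2 logarithm. `Real.logb 2 0 = 0`, so
`H2 0 = H2 1 = 0` automatically. -/
noncomputable def H2 (p : ℝ) : ℝ :=
  -(p * Real.logb 2 p) - (1 - p) * Real.logb 2 (1 - p)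

/-- Partial sums `s_j = ∑_{k=1}^j c_k` of the beam-budget sequence. -/
noncomputable def s (K B : ℝ) : ℕ → ℝ
  | 0 => 0
  | (j+1) => s K B j + min ((K - s K B j) / 2) B

/-- The beam-budget sequence: `c_0 = 0` and `c_j = min((K - s_{j-1})/2, B)` for `j ≥ 1`. -/
noncomputable def c (K B : ℝ) : ℕ → ℝ
  | 0 => 0
  | (j+1) => min ((K - s K B j) / 2) B

/-- The `j`-th term of the outer bound (Theorem 1), for `j ≥ 1`. -/
noncomputable def t (K B : ℝ) (j : ℕ) : ℝ :=
  (1 - s K B (j-1) / K) * H2 (c K B j / (K - s K B (j-1))) + s K B (j-1) / K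

/-- The outer-bound (Theorem 1) expression `U(L)`. -/
noncomputable def U (K B : ℝ) (L : ℕ) : ℝ :=
  (1 / (L : ℝ)) * ∑ j ∈ Finset.Icc 1 L, t K B j

/-- The `j`-th eavesdropper-leakage term, for `j ≥ 1` (natural subtraction makes the
middle term vanish at `j = 1` and the final sum empty for `j ≤ 3`). -/
noncomputable def g (K B : ℝ) (j : ℕ) : ℝ :=
  ((K - s K B (j-1)) / K) * H2 (c K B j / K)
  + (c K B (j-1) * (K - s K B (j-2)) / K^2) *
      H2 ((1/2) * c K B (j-1) / (K - s K B (j-2)))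
  + ∑ k ∈ Finset.Icc 1 (j-3),
      (1/K) * ((c K B (k+1))^2 / K^2) * (1/2 : ℝ)^(2*(j-k-2)-1)

/-- The gap `G(L)` between the outer and inner bounds. -/
noncomputable def G (K B : ℝ) (L : ℕ) : ℝ :=
  (1 / (L : ℝ)) * ∑ j ∈ Finset.Icc 1 L, g K B j

/-- The inner-bound (Theorem 2) expression `I(L) = U(L) - G(L)`. -/
noncomputable def Ib (K B : ℝ) (L : ℕ) : ℝ := U K B L - G K B L

lemma two_zpow_neg (n : ℕ) : (2:ℝ)^(-(n:ℤ)) = (1/2:ℝ)^n := by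
  rw [zpow_neg, zpow_natCast, one_div, inv_pow]

lemma min_eq_aux (K B : ℝ) (hK : 0 < K) (hB : K/2 ≤ B) (n : ℕ)
    (hs : s K B n = K - K * (1/2:ℝ)^n) :
    min ((K - s K B n)/2) B = K * (1/2:ℝ)^(n+1) := by
  have h1 : (K - s K B n)/2 = K * (1/2:ℝ)^(n+1) := by rw [hs]; ring
  rw [h1, min_eq_left]
  calc K * (1/2:ℝ)^(n+1) ≤ K * (1/2:ℝ)^1 := by
        apply mul_le_mul_of_nonneg_left _ hK.le
        exact pow_le_pow_of_le_one (by norm_num) (by norm_num) (by omega)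
    _ ≤ B := by rw [pow_one]; linarith
  
lemma s_closed (K B : ℝ) (hK : 0 < K) (hB : K/2 ≤ B) :
    ∀ j, s K B j = K - K * (1/2:ℝ)^j := by
  intro j
  induction j with
  | zero => simp [s]
  | succ n ih =>
    show s K B n + min ((K - s K B n)/2) B = _
    rw [min_eq_aux K B hK hB n ih, ih]; ring

lemma c_closed (K B : ℝ) (hK : 0 < K) (hB : K/2 ≤ B) (n : ℕ) :
    c K B (n+1) = K * (1/2:ℝ)^(n+1) := by
  show min ((K - s K B n)/2) B = _
  exact min_eq_aux K B hK hB n (s_closed K B hK hB n)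

lemma g_closed (K B : ℝ) (hK : 0 < K) (hB : K/2 ≤ B) (j : ℕ) (hj : 1 ≤ j) :
    g K B j = (2 : ℝ)^(-((j : ℤ) - 1)) * H2 ((2 : ℝ)^(-(j : ℤ)))
      + (if 2 ≤ j then (2 : ℝ)^(3 - 2*(j : ℤ)) else 0) * H2 (1/4)
      + ((j - 3 : ℕ) : ℝ) * (2 : ℝ)^(3 - 2*(j : ℤ)) / K := by
  obtain ⟨n, rfl⟩ : ∃ n, j = n + 1 := ⟨j - 1, by omega⟩
  have hK0 : K ≠ 0 := hK.ne'
  have hsc := s_closed K B hK hB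
  have hcc := c_closed K B hK hB
  -- first term
  have e1 : ((K - s K B (n+1-1)) / K) * H2 (c K B (n+1) / K)
      = (2 : ℝ)^(-((n+1 : ℤ) - 1)) * H2 ((2 : ℝ)^(-((n+1:ℕ) : ℤ))) := by
    have h1 : (K - s K B n) / K = (1/2:ℝ)^n := by
      rw [hsc n]; field_simp; ring
    have h2 : c K B (n+1) / K = (1/2:ℝ)^(n+1) := by
      rw [hcc n]; field_simp
    have h3 : -((n+1 : ℤ) - 1) = -(n:ℤ) := by ring
    rw [Nat.add_sub_cancel, h1, h2]
    have h4 : -((n+1 : ℤ) - 1) = -((n:ℕ):ℤ) := by push_cast; ring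
    have h5 : (-((n+1:ℕ):ℤ)) = -(((n+1:ℕ)):ℤ) := rfl
    rw [h4, two_zpow_neg]
    congr 1
    rw [two_zpow_neg]
  -- middle term
  have e2 : (c K B (n+1-1) * (K - s K B (n+1-2)) / K^2) *
      H2 ((1/2) * c K B (n+1-1) / (K - s K B (n+1-2)))
      = (if 2 ≤ n+1 then (2 : ℝ)^(3 - 2*((n+1:ℕ) : ℤ)) else 0) * H2 (1/4) := by
    match n with
    | 0 => simp [c]
    | m+1 =>
      have h4 : (m+1+1-1 : ℕ) = m+1 := rfl
      have h5 : (m+1+1-2 : ℕ) = m := rfl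
      rw [h4, h5, hcc m, hsc m]
      have hpow : (1/2:ℝ)^m ≠ 0 := by positivity
      have harg : (1/2) * (K * (1/2:ℝ)^(m+1)) / (K - (K - K * (1/2:ℝ)^m)) = 1/4 := by
        rw [sub_sub_cancel]
        field_simp
        ring
      have hcoef : K * (1/2:ℝ)^(m+1) * (K - (K - K * (1/2:ℝ)^m)) / K^2
          = (2:ℝ)^(3 - 2*((m+1+1:ℕ) : ℤ)) := by
        rw [sub_sub_cancel]
        have : (3 - 2*((m+1+1:ℕ) : ℤ)) = -((2*m+1 : ℕ) : ℤ) := by push_cast; ring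
        rw [this, two_zpow_neg]
        field_simp
        ring
      rw [harg, hcoef, if_pos (by omega)]
  -- sum term
  have e3 : (∑ k ∈ Finset.Icc 1 (n+1-3),
      (1/K) * ((c K B (k+1))^2 / K^2) * (1/2 : ℝ)^(2*(n+1-k-2)-1))
      = ((n+1 - 3 : ℕ) : ℝ) * (2 : ℝ)^(3 - 2*((n+1:ℕ) : ℤ)) / K := by
    rcases le_or_gt (n+1) 3 with h | h
    · have : n+1-3 = 0 := by omega
      simp [this]
    · obtain ⟨m, rfl⟩ : ∃ m, n = m + 3 := ⟨n - 3, by omega⟩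
      have hconst : ∀ k ∈ Finset.Icc 1 (m+3+1-3),
          (1/K) * ((c K B (k+1))^2 / K^2) * (1/2 : ℝ)^(2*(m+3+1-k-2)-1)
          = (2 : ℝ)^(3 - 2*((m+3+1:ℕ) : ℤ)) / K := by
        intro k hk
        simp only [Finset.mem_Icc] at hk
        rw [hcc k]
        have hexp : (2*(m+3+1-k-2)-1) + (2*(k+1)) = 2*m+5 := by omega
        have hz : (3 - 2*((m+3+1:ℕ) : ℤ)) = -((2*m+5 : ℕ) : ℤ) := by push_cast; ring
        rw [hz, two_zpow_neg, ← hexp, pow_add]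
        field_simp
        ring
      rw [Finset.sum_congr rfl hconst, Finset.sum_const, Nat.card_Icc]
      have : (m+3+1-3) + 1 - 1 = m + 1 := by omega
      rw [this]
      push_cast
      ring
  rw [g, e1, e2, e3]
  norm_cast

theorem stmt_17 (K : ℕ) (hK : 2 ≤ K) (B : ℝ) (hB : 0 < B) (hB2 : (K : ℝ) / 2 ≤ B) :
    ∀ L : ℕ, 1 ≤ L →
      G K B L = (1 / (L : ℝ)) * ∑ j ∈ Finset.Icc 1 L,
        ((2 : ℝ)^(-((j : ℤ) - 1)) * H2 ((2 : ℝ)^(-(j : ℤ)))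
          + (if 2 ≤ j then (2 : ℝ)^(3 - 2*(j : ℤ)) else 0) * H2 (1/4)
          + ((j - 3 : ℕ) : ℝ) * (2 : ℝ)^(3 - 2*(j : ℤ)) / (K : ℝ)) := by
  intro L hL
  have hK0 : (0:ℝ) < (K:ℝ) := by
    have : (2:ℝ) ≤ (K:ℝ) := by exact_mod_cast hK
    linarith
  unfold G
  congr 1
  apply Finset.sum_congr rfl
  intro j hj
  simp only [Finset.mem_Icc] at hj
  exact g_closed (K:ℝ) B hK0 hB2 j hj.1
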